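/- arXiv:2107.14575 — 3 statements merged into one kernel-verified Lean document; each statement's English description precedes it below -/
import Mathlib

section
/- Fix x_t ∈ ℝ^d and W workers. Suppose for each worker i the stochastic gradient g_t^{(i)} satisfies E[g_t^{(i)}] = ∇F(x_t) and E[‖g_t^{(i)} − ∇F(x_t)‖₂²] ≤ σ², the W pairs (g_t^{(i)}, quantization randomness) are mutually independent, and conditionally on g_t^{(i)} the EWU quantizer with b_t bits (quantization level s = 2^{b_t−1} − 1) satisfies E[Q_{b_t}[g_t^{(i)}] | g_t^{(i)}] = g_t^{(i)} and E[‖Q_{b_t}[g_t^{(i)}] − g_t^{(i)}‖₂² | g_t^{(i)}] ≤ d·‖g_t^{(i)}‖_p²/(4(2^{b_t−1}−1)²). Then ĝ_t = (1/W)·Σ_i Q_{b_t}[g_t^{(i)}] satisfies E[‖ĝ_t‖₂²] ≤ ‖∇F(x_t)‖₂² + σ²/W + d·E[Ḡ_t²]/(4W(2^{b_t−1}−1)²), where Ḡ_t² = (1/W)·Σ_{i=1}^{W} ‖g_t^{(i)}‖_p². (Second claim of Lemma 1.) -/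
open MeasureTheory

/-- The `l_p` norm of a vector `g ∈ ℝ^d`. -/
noncomputable def lpNorm {d : ℕ} (p : ℝ) (g : EuclideanSpace ℝ (Fin d)) : ℝ :=
  (∑ j, |g j| ^ p) ^ (1 / p)

section AuxProof
open Function
open scoped ENNReal

set_option linter.unusedSectionVars false
set_option linter.unusedVariables false

lemma euclid_sum_apply {d : ℕ} {α : Type*} (s : Finset α)
    (v : α → EuclideanSpace ℝ (Fin d)) (k : Fin d) :
    (∑ i ∈ s, v i) k = ∑ i ∈ s, v i k := by
  classical
  induction s using Finset.induction with
  | empty => rfl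
  | @insert a s h ih => rw [Finset.sum_insert h, Finset.sum_insert h, ← ih]; rfl


section Helpers

variable {ι Ω : Type*} [Fintype ι] [MeasurableSpace Ω]
  (μ : ι → Measure Ω) [∀ i, IsProbabilityMeasure (μ i)]

lemma pi_map_eval' (i : ι) : (Measure.pi μ).map (Function.eval i) = μ i := by
  classical
  ext s hs
  rw [Measure.map_apply (measurable_pi_apply i) hs, Set.eval_preimage, Measure.pi_pi]
  rw [Finset.prod_eq_single i (fun l _ hl => by
      rw [Function.update_of_ne hl]; exact measure_univ)
    (fun h => absurd (Finset.mem_univ i) h), Function.update_self]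

lemma pi_eval_preimage' (i : ι) {s : Set Ω} (hs : MeasurableSet s) :
    Measure.pi μ (Function.eval i ⁻¹' s) = μ i s := by
  rw [← Measure.map_apply (measurable_pi_apply i) hs, pi_map_eval']

lemma integral_eval' {E : Type*} [NormedAddCommGroup E] [NormedSpace ℝ E] (i : ι)
    (f : Ω → E) (hf : AEStronglyMeasurable f (μ i)) :
    ∫ x, f (x i) ∂Measure.pi μ = ∫ x, f x ∂μ i := by
  have hfm : AEStronglyMeasurable f ((Measure.pi μ).map (Function.eval i)) := by
    rwa [pi_map_eval']
  have := integral_map (μ := Measure.pi μ) (measurable_pi_apply i).aemeasurable hfm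
  rw [pi_map_eval'] at this
  exact this.symm

lemma integrable_eval' {E : Type*} [NormedAddCommGroup E] (i : ι)
    {f : Ω → E} (hf : AEStronglyMeasurable f (μ i)) :
    Integrable (fun x => f (x i)) (Measure.pi μ) ↔ Integrable f (μ i) := by
  have hfm : AEStronglyMeasurable f ((Measure.pi μ).map (Function.eval i)) := by
    rwa [pi_map_eval']
  have := integrable_map_measure hfm (measurable_pi_apply i).aemeasurable
  rw [pi_map_eval'] at this
  exact this.symm

lemma indepFun_eval' (i j : ι) (hij : i ≠ j) :
    ProbabilityTheory.IndepFun (Function.eval i) (Function.eval j) (Measure.pi μ) := by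
  classical
  rw [ProbabilityTheory.indepFun_iff_measure_inter_preimage_eq_mul]
  intro s t hs ht
  have h1 : Function.eval i ⁻¹' s ∩ Function.eval j ⁻¹' t =
      Set.pi Set.univ (Function.update (Function.update (fun _ => (Set.univ : Set Ω)) i s) j t) := by
    ext ω
    simp only [Set.mem_inter_iff, Set.mem_preimage, Set.mem_pi, Set.mem_univ, true_implies]
    constructor
    · rintro ⟨h1, h2⟩ l
      rcases eq_or_ne l j with rfl | hlj
      · rwa [Function.update_self]
      rcases eq_or_ne l i with rfl | hli
      · rwa [Function.update_of_ne hlj, Function.update_self]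
      · simp [Function.update_of_ne hlj, Function.update_of_ne hli]
    · intro h
      refine ⟨?_, ?_⟩
      · have := h i; rwa [Function.update_of_ne hij, Function.update_self] at this
      · have := h j; rwa [Function.update_self] at this
  rw [h1, Measure.pi_pi, pi_eval_preimage' μ i hs, pi_eval_preimage' μ j ht]
  rw [← Finset.prod_subset (Finset.subset_univ ({i, j} : Finset ι))
    (fun l _ hl => ?_)]
  · rw [Finset.prod_pair hij, Function.update_of_ne hij, Function.update_self,
      Function.update_self]
  · simp only [Finset.mem_insert, Finset.mem_singleton, not_or] at hl
    rw [Function.update_of_ne hl.2, Function.update_of_ne hl.1]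
    exact measure_univ

end Helpers



section Worker
variable {d : ℕ} {Ω : Type*} [MeasurableSpace Ω] {ν : Measure Ω} [IsProbabilityMeasure ν]

lemma sq_integrable' {f : Ω → ℝ} (hf : MemLp f 2 ν) : Integrable (fun ω => f ω ^ 2) ν := by
  have h := hf.integrable_norm_rpow two_ne_zero ENNReal.ofNat_ne_top
  refine h.congr (Filter.Eventually.of_forall fun ω => ?_)
  show ‖f ω‖ ^ ((2 : ℝ≥0∞)).toReal = f ω ^ 2
  rw [ENNReal.toReal_ofNat, Real.rpow_two, Real.norm_eq_abs, sq_abs]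

lemma normsq_integrable' {f : Ω → EuclideanSpace ℝ (Fin d)} (hf : MemLp f 2 ν) :
    Integrable (fun ω => ‖f ω‖ ^ 2) ν := by
  have h := hf.integrable_norm_rpow two_ne_zero ENNReal.ofNat_ne_top
  refine h.congr (Filter.Eventually.of_forall fun ω => ?_)
  show ‖f ω‖ ^ ((2 : ℝ≥0∞)).toReal = ‖f ω‖ ^ 2
  rw [ENNReal.toReal_ofNat, Real.rpow_two]

lemma l2_mul_integrable' {f h : Ω → ℝ} (hf : MemLp f 2 ν) (hh : MemLp h 2 ν) :
    Integrable (fun ω => f ω * h ω) ν := by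
  have hone : (1 : ℝ≥0∞) / 1 = 1 / 2 + 1 / 2 := by
    rw [div_one, ENNReal.div_add_div_same]
    rw [show (1 : ℝ≥0∞) + 1 = 2 from one_add_one_eq_two]
    exact (ENNReal.div_self (by norm_num) (by norm_num)).symm
  have := memLp_one_iff_integrable.mp (hf.smul hh (p := 2) (q := 2) (r := 1))
  exact this.congr (Filter.Eventually.of_forall fun ω => mul_comm _ _)

lemma coord_memℒp {f : Ω → EuclideanSpace ℝ (Fin d)} (hf : MemLp f 2 ν) (k : Fin d) :
    MemLp (fun ω => f ω k) 2 ν :=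
  (EuclideanSpace.proj (𝕜 := ℝ) k).comp_memLp' hf

lemma normsq_eq_sum (v : EuclideanSpace ℝ (Fin d)) : ‖v‖ ^ 2 = ∑ k, (v k) ^ 2 := by
  rw [EuclideanSpace.norm_eq, Real.sq_sqrt (by positivity)]
  simp [Real.norm_eq_abs, sq_abs]

lemma integral_normsq_eq {f : Ω → EuclideanSpace ℝ (Fin d)} (hf : MemLp f 2 ν) :
    ∫ ω, ‖f ω‖ ^ 2 ∂ν = ∑ k, ∫ ω, (f ω k) ^ 2 ∂ν := by
  rw [← integral_finset_sum _ (fun k _ => sq_integrable' (coord_memℒp hf k))]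
  exact integral_congr_ae (Filter.Eventually.of_forall fun ω => normsq_eq_sum (f ω))

lemma lpNorm_nonneg' {p : ℝ} (v : EuclideanSpace ℝ (Fin d)) : 0 ≤ lpNorm p v :=
  Real.rpow_nonneg (Finset.sum_nonneg fun j _ => Real.rpow_nonneg (abs_nonneg _) _) _

lemma lpNorm_le_norm {p : ℝ} (hp : 1 ≤ p) (v : EuclideanSpace ℝ (Fin d)) :
    lpNorm p v ≤ d * ‖v‖ := by
  have hp0 : 0 < p := lt_of_lt_of_le one_pos hp
  rcases Nat.eq_zero_or_pos d with hd | hd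
  · subst hd
    simp only [_root_.lpNorm, Finset.univ_eq_empty, Finset.sum_empty, Nat.cast_zero, zero_mul]
    rw [Real.zero_rpow (by positivity : 1 / p ≠ 0)]
  · have h1 : ∀ j, |v j| ≤ ‖v‖ := fun j => by
      rw [EuclideanSpace.norm_eq, ← Real.sqrt_sq_eq_abs]
      refine Real.sqrt_le_sqrt ?_
      refine Finset.single_le_sum (f := fun i => ‖v i‖ ^ 2) (fun i _ => by positivity)
        (Finset.mem_univ j) |>.trans_eq' ?_
      rw [Real.norm_eq_abs, sq_abs]
    have h2 : ∑ j, |v j| ^ p ≤ (d : ℝ) * ‖v‖ ^ p := by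
      calc ∑ j, |v j| ^ p ≤ ∑ _j : Fin d, ‖v‖ ^ p :=
            Finset.sum_le_sum fun j _ => Real.rpow_le_rpow (abs_nonneg _) (h1 j) hp0.le
        _ = (d : ℝ) * ‖v‖ ^ p := by simp [mul_comm]
    have h3 : lpNorm p v ≤ ((d : ℝ) * ‖v‖ ^ p) ^ (1 / p) :=
      Real.rpow_le_rpow (Finset.sum_nonneg fun j _ => Real.rpow_nonneg (abs_nonneg _) _)
        h2 (by positivity)
    have h4 : ((d : ℝ) * ‖v‖ ^ p) ^ (1 / p) = (d : ℝ) ^ (1 / p) * ‖v‖ := by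
      rw [Real.mul_rpow (by positivity) (Real.rpow_nonneg (norm_nonneg _) _),
        ← Real.rpow_mul (norm_nonneg v), mul_one_div_cancel hp0.ne', Real.rpow_one]
    have h5 : (d : ℝ) ^ (1 / p) ≤ d := by
      calc (d : ℝ) ^ (1 / p) ≤ (d : ℝ) ^ (1 : ℝ) :=
            Real.rpow_le_rpow_of_exponent_le (by exact_mod_cast hd) (by
              rw [div_le_one hp0]; exact hp)
        _ = d := Real.rpow_one _
    refine h3.trans ?_
    rw [h4]
    exact mul_le_mul_of_nonneg_right h5 (norm_nonneg v)

lemma lpNorm_measurable {p : ℝ} (hp : 1 ≤ p) {g : Ω → EuclideanSpace ℝ (Fin d)}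
    (hg : Measurable g) :
    Measurable fun ω => lpNorm p (g ω) := by
  have h0 : (0 : ℝ) ≤ p := by linarith
  have h1 : (0 : ℝ) ≤ 1 / p := by positivity
  unfold _root_.lpNorm
  exact ((Real.continuous_rpow_const h1).measurable).comp
    (Finset.measurable_sum _ fun j _ =>
      ((Real.continuous_rpow_const h0).measurable).comp
        (((measurable_pi_apply j).comp ((WithLp.measurable_ofLp 2 _).comp hg)).abs))

lemma lpNorm_memℒp {p : ℝ} (hp : 1 ≤ p) {g : Ω → EuclideanSpace ℝ (Fin d)}
    (hg : Measurable g) (hgL2 : MemLp g 2 ν) :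
    MemLp (fun ω => lpNorm p (g ω)) 2 ν := by
  refine MemLp.of_le (hgL2.norm.const_mul (d : ℝ))
    (lpNorm_measurable hp hg).aestronglyMeasurable
    (Filter.Eventually.of_forall fun ω => ?_)
  rw [Real.norm_eq_abs, abs_of_nonneg (lpNorm_nonneg' _), Real.norm_eq_abs]
  refine (lpNorm_le_norm hp (g ω)).trans ?_
  rw [abs_of_nonneg (by positivity)]

lemma condexp_coord {g Q : Ω → EuclideanSpace ℝ (Fin d)} (hgmeas : Measurable g)
    (hgint : Integrable g ν) (hQint : Integrable Q ν)
    (hQmean : ν[Q|MeasurableSpace.comap g inferInstance] =ᵐ[ν] g) (k : Fin d) :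
    ν[fun ω => Q ω k|MeasurableSpace.comap g inferInstance] =ᵐ[ν] fun ω => g ω k := by
  have hm : MeasurableSpace.comap g inferInstance ≤ _ := hgmeas.comap_le
  have hQk : Integrable (fun ω => Q ω k) ν :=
    ((EuclideanSpace.proj (𝕜 := ℝ) k).integrable_comp hQint : _)
  have hgk : Integrable (fun ω => g ω k) ν :=
    ((EuclideanSpace.proj (𝕜 := ℝ) k).integrable_comp hgint : _)
  refine (ae_eq_condExp_of_forall_setIntegral_eq hm hQk
    (fun s _ _ => hgk.integrableOn) (fun s hs hνs => ?_) ?_).symm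
  · have h1 : ∫ ω in s, Q ω ∂ν = ∫ ω in s, g ω ∂ν := by
      rw [← setIntegral_condExp hm hQint hs]
      exact setIntegral_congr_ae (hm s hs) (hQmean.mono fun ω h _ => h)
    have h2 := (EuclideanSpace.proj (𝕜 := ℝ) k).integral_comp_comm
      (hQint.integrableOn (s := s))
    have h3 := (EuclideanSpace.proj (𝕜 := ℝ) k).integral_comp_comm
      (hgint.integrableOn (s := s))
    show ∫ ω in s, (EuclideanSpace.proj (𝕜 := ℝ) k) (g ω) ∂ν
        = ∫ ω in s, (EuclideanSpace.proj (𝕜 := ℝ) k) (Q ω) ∂ν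
    rw [h3, h2, h1]
  · have hgm : Measurable[MeasurableSpace.comap g inferInstance] g := comap_measurable g
    exact ((Measurable.stronglyMeasurable
      ((measurable_pi_apply k).comp ((WithLp.measurable_ofLp 2 _).comp hgm)))).aestronglyMeasurable

lemma cross_eq {g Q : Ω → EuclideanSpace ℝ (Fin d)} (hgmeas : Measurable g)
    (hgL2 : MemLp g 2 ν) (hQL2 : MemLp Q 2 ν)
    (hQmean : ν[Q|MeasurableSpace.comap g inferInstance] =ᵐ[ν] g) (c : EuclideanSpace ℝ (Fin d))
    (k : Fin d) :
    ∫ ω, Q ω k * (g ω k - c k) ∂ν = ∫ ω, g ω k * (g ω k - c k) ∂ν := by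
  have hm : MeasurableSpace.comap g inferInstance ≤ _ := hgmeas.comap_le
  have hgm : Measurable[MeasurableSpace.comap g inferInstance] g := comap_measurable g
  have hQkL2 : MemLp (fun ω => Q ω k) 2 ν := coord_memℒp hQL2 k
  have hgkL2 : MemLp (fun ω => g ω k) 2 ν := coord_memℒp hgL2 k
  have hhL2 : MemLp (fun ω => g ω k - c k) 2 ν := hgkL2.sub (memLp_const _)
  have hhm : StronglyMeasurable[MeasurableSpace.comap g inferInstance]
      fun ω => g ω k - c k :=
    Measurable.stronglyMeasurable (((measurable_pi_apply k).comp ((WithLp.measurable_ofLp 2 _).comp hgm)).sub (@measurable_const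
      _ _ _ (MeasurableSpace.comap g inferInstance) _))
  have hint1 : Integrable ((fun ω => g ω k - c k) * fun ω => Q ω k) ν :=
    l2_mul_integrable' hhL2 hQkL2
  have e1 := condExp_mul_of_stronglyMeasurable_left hhm hint1 (hQkL2.integrable one_le_two)
  have e2 := condexp_coord hgmeas (hgL2.integrable one_le_two) (hQL2.integrable one_le_two)
    hQmean k
  calc ∫ ω, Q ω k * (g ω k - c k) ∂ν
      = ∫ ω, ((fun ω => g ω k - c k) * fun ω => Q ω k) ω ∂ν := by
        refine integral_congr_ae (Filter.Eventually.of_forall fun ω => ?_)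
        simp [mul_comm]
    _ = ∫ ω, (ν[(fun ω => g ω k - c k) * fun ω => Q ω k|
          MeasurableSpace.comap g inferInstance]) ω ∂ν := (integral_condExp hm).symm
    _ = ∫ ω, g ω k * (g ω k - c k) ∂ν := by
        refine integral_congr_ae ((e1.and e2).mono fun ω h => ?_)
        rw [h.1, Pi.mul_apply, h.2]
        ring

lemma worker_mean {g Q : Ω → EuclideanSpace ℝ (Fin d)} (hgmeas : Measurable g)
    (hQint : Integrable Q ν)
    (hQmean : ν[Q|MeasurableSpace.comap g inferInstance] =ᵐ[ν] g) :
    ∫ ω, Q ω ∂ν = ∫ ω, g ω ∂ν := by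
  have hm : MeasurableSpace.comap g inferInstance ≤ _ := hgmeas.comap_le
  calc ∫ ω, Q ω ∂ν = ∫ ω, (ν[Q|MeasurableSpace.comap g inferInstance]) ω ∂ν :=
        (integral_condExp hm).symm
    _ = ∫ ω, g ω ∂ν := integral_congr_ae hQmean

lemma worker_var {g Q : Ω → EuclideanSpace ℝ (Fin d)} (hgmeas : Measurable g)
    (hgL2 : MemLp g 2 ν) (hQL2 : MemLp Q 2 ν)
    (hQmean : ν[Q|MeasurableSpace.comap g inferInstance] =ᵐ[ν] g)
    {β : Ω → ℝ} (hβint : Integrable β ν)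
    (hQvar : ν[fun ω => ‖Q ω - g ω‖ ^ 2|MeasurableSpace.comap g inferInstance] ≤ᵐ[ν] β)
    (c : EuclideanSpace ℝ (Fin d)) :
    ∫ ω, ‖Q ω - c‖ ^ 2 ∂ν ≤ ∫ ω, β ω ∂ν + ∫ ω, ‖g ω - c‖ ^ 2 ∂ν := by
  have hm : MeasurableSpace.comap g inferInstance ≤ _ := hgmeas.comap_le
  have hQc : MemLp (fun ω => Q ω - c) 2 ν := hQL2.sub (memLp_const c)
  have hQg : MemLp (fun ω => Q ω - g ω) 2 ν := hQL2.sub hgL2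
  have hgc : MemLp (fun ω => g ω - c) 2 ν := hgL2.sub (memLp_const c)
  have key : ∫ ω, ‖Q ω - c‖ ^ 2 ∂ν
      = ∫ ω, ‖Q ω - g ω‖ ^ 2 ∂ν + ∫ ω, ‖g ω - c‖ ^ 2 ∂ν := by
    have e1 := integral_normsq_eq hQc
    have e2 := integral_normsq_eq hQg
    have e3 := integral_normsq_eq hgc
    rw [e1, e2, e3, ← Finset.sum_add_distrib]
    refine Finset.sum_congr rfl fun k _ => ?_
    have hQk : MemLp (fun ω => Q ω k) 2 ν := coord_memℒp hQL2 k
    have hgk : MemLp (fun ω => g ω k) 2 ν := coord_memℒp hgL2 k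
    have MA : MemLp (fun ω => Q ω k - g ω k) 2 ν := hQk.sub hgk
    have MB : MemLp (fun ω => g ω k - c k) 2 ν := hgk.sub (memLp_const _)
    have hcr := cross_eq hgmeas hgL2 hQL2 hQmean c k
    have I1 : Integrable (fun ω => (Q ω k - g ω k) ^ 2 + (g ω k - c k) ^ 2) ν :=
      (sq_integrable' MA).add (sq_integrable' MB)
    have I2 : Integrable (fun ω => Q ω k * (g ω k - c k)) ν := l2_mul_integrable' hQk MB
    have I3 : Integrable (fun ω => g ω k * (g ω k - c k)) ν := l2_mul_integrable' hgk MB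
    have pt : (fun ω => ((fun ω => Q ω - c) ω k) ^ 2)
        = fun ω => (((Q ω k - g ω k) ^ 2 + (g ω k - c k) ^ 2)
            + 2 * (Q ω k * (g ω k - c k))) - 2 * (g ω k * (g ω k - c k)) := by
      funext ω
      show (Q ω k - c k) ^ 2 = _
      ring
    have I12 : Integrable (fun ω => ((Q ω k - g ω k) ^ 2 + (g ω k - c k) ^ 2)
        + 2 * (Q ω k * (g ω k - c k))) ν := by exact I1.add (I2.const_mul 2)
    rw [pt, integral_sub I12 (I3.const_mul 2),
      integral_add I1 (I2.const_mul 2), integral_add (sq_integrable' MA) (sq_integrable' MB),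
      integral_const_mul, integral_const_mul, hcr]
    have c1 : (fun ω => ((fun ω => Q ω - g ω) ω k) ^ 2) = fun ω => (Q ω k - g ω k) ^ 2 := rfl
    have c2 : (fun ω => ((fun ω => g ω - c) ω k) ^ 2) = fun ω => (g ω k - c k) ^ 2 := rfl
    rw [c1, c2]
    ring
  have step4 : ∫ ω, ‖Q ω - g ω‖ ^ 2 ∂ν ≤ ∫ ω, β ω ∂ν := by
    rw [← integral_condExp hm (f := fun ω => ‖Q ω - g ω‖ ^ 2)]
    exact integral_mono_ae integrable_condExp hβint hQvar
  rw [key]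
  exact add_le_add_left step4 _

end Worker

end AuxProof

/-- **second claim of Lemma 1.** If each worker's stochastic gradient is
unbiased with variance at most `σ²`, the workers are mutually independent (modelled by a
product probability space), and the EWU quantizer with `b_t` bits is conditionally unbiased
with conditional variance at most `d·‖g‖_p²/(4(2^{b_t−1}−1)²)`, then the aggregated gradient
`ĝ_t = (1/W)·Σᵢ Q[g_t⁽ⁱ⁾]` satisfies
`E[‖ĝ_t‖₂²] ≤ ‖∇F(x_t)‖₂² + σ²/W + d·E[Ḡ_t²]/(4W(2^{b_t−1}−1)²)`,
where `Ḡ_t² = (1/W)·Σᵢ ‖g_t⁽ⁱ⁾‖_p²`. -/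
theorem aggregated_gradient_second_moment {d W : ℕ} (hW : 0 < W) (p : ℝ) (hp : 1 ≤ p)
    (F : EuclideanSpace ℝ (Fin d) → ℝ) (hF : Differentiable ℝ F)
    (xt : EuclideanSpace ℝ (Fin d)) (σ : ℝ) (b : ℕ) (hb : 2 ≤ b)
    {Ω : Type*} [MeasurableSpace Ω]
    -- each worker `i` has its own independent randomness with law `μ i`
    (μ : Fin W → Measure Ω) [∀ i, IsProbabilityMeasure (μ i)]
    -- the stochastic gradient and the quantized gradient of worker `i`
    (g : Fin W → Ω → EuclideanSpace ℝ (Fin d))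
    (Q : Fin W → Ω → EuclideanSpace ℝ (Fin d))
    (hgmeas : ∀ i, Measurable (g i)) (hQmeas : ∀ i, Measurable (Q i))
    (hgL2 : ∀ i, MemLp (g i) 2 (μ i)) (hQL2 : ∀ i, MemLp (Q i) 2 (μ i))
    -- unbiasedness and bounded variance of the stochastic gradients
    (hgmean : ∀ i, ∫ ω, g i ω ∂(μ i) = gradient F xt)
    (hgvar : ∀ i, ∫ ω, ‖g i ω - gradient F xt‖ ^ 2 ∂(μ i) ≤ σ ^ 2)
    -- the quantizer is unbiased conditionally on its input `g i`
    (hQmean : ∀ i,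
      (μ i)[Q i|MeasurableSpace.comap (g i) inferInstance] =ᵐ[μ i] g i)
    -- conditional quantization variance bound
    (hQvar : ∀ i,
      (μ i)[fun ω => ‖Q i ω - g i ω‖ ^ 2|MeasurableSpace.comap (g i) inferInstance]
        ≤ᵐ[μ i] fun ω => d * lpNorm p (g i ω) ^ 2 / (4 * ((2 : ℝ) ^ (b - 1) - 1) ^ 2)) :
    ∫ ω, ‖(W : ℝ)⁻¹ • ∑ i, Q i (ω i)‖ ^ 2 ∂(Measure.pi μ) ≤
      ‖gradient F xt‖ ^ 2 + σ ^ 2 / W +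
        d * (∫ ω, (W : ℝ)⁻¹ * ∑ i, lpNorm p (g i (ω i)) ^ 2 ∂(Measure.pi μ)) /
          (4 * W * ((2 : ℝ) ^ (b - 1) - 1) ^ 2) := by
  classical
  set c : EuclideanSpace ℝ (Fin d) := gradient F xt with hc
  set C : ℝ := 4 * ((2 : ℝ) ^ (b - 1) - 1) ^ 2 with hCdef
  have hs1 : (1 : ℝ) < 2 ^ (b - 1) := by
    have : 1 ≤ b - 1 := by omega
    calc (1 : ℝ) < 2 ^ 1 := by norm_num
      _ ≤ 2 ^ (b - 1) := by
        exact pow_le_pow_right₀ one_le_two this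
  have hCpos : 0 < C := by
    rw [hCdef]
    have : 0 < (2 : ℝ) ^ (b - 1) - 1 := by linarith
    positivity
  have hWpos : (0 : ℝ) < W := by exact_mod_cast hW
  -- basic integrability facts per worker
  have hQint : ∀ i, Integrable (Q i) (μ i) := fun i => (hQL2 i).integrable one_le_two
  have hgint : ∀ i, Integrable (g i) (μ i) := fun i => (hgL2 i).integrable one_le_two
  have hQmean' : ∀ i, ∫ ω, Q i ω ∂μ i = c := fun i =>
    (worker_mean (hgmeas i) (hQint i) (hQmean i)).trans (hgmean i)
  have mQik : ∀ i k, Measurable fun x => Q i x k := fun i k =>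
    (measurable_pi_apply k).comp ((WithLp.measurable_ofLp 2 _).comp (hQmeas i))
  have QikL2 : ∀ i k, MemLp (fun x => Q i x k) 2 (μ i) := fun i k => coord_memℒp (hQL2 i) k
  have QikL1 : ∀ i k, Integrable (fun x => Q i x k) (μ i) := fun i k =>
    (QikL2 i k).integrable one_le_two
  have meanQk : ∀ i k, ∫ x, Q i x k ∂μ i = c k := by
    intro i k
    have h := (EuclideanSpace.proj (𝕜 := ℝ) k).integral_comp_comm (hQint i)
    calc ∫ x, Q i x k ∂μ i
        = ∫ x, (EuclideanSpace.proj (𝕜 := ℝ) k) (Q i x) ∂μ i := rfl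
      _ = (EuclideanSpace.proj (𝕜 := ℝ) k) (∫ x, Q i x ∂μ i) := h
      _ = c k := by rw [hQmean' i]; rfl
  -- lp-norm integrability
  have lpInt : ∀ i, Integrable (fun ω => lpNorm p (g i ω) ^ 2) (μ i) := fun i =>
    sq_integrable' (lpNorm_memℒp hp (hgmeas i) (hgL2 i))
  have lpMeas : ∀ i, Measurable fun ω => lpNorm p (g i ω) ^ 2 := fun i =>
    (lpNorm_measurable hp (hgmeas i)).pow_const 2
  set L : Fin W → ℝ := fun i => ∫ x, lpNorm p (g i x) ^ 2 ∂μ i with hL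
  have βint : ∀ i, Integrable (fun ω => d * lpNorm p (g i ω) ^ 2 / C) (μ i) := fun i =>
    ((lpInt i).const_mul _).div_const _
  have βval : ∀ i, ∫ ω, d * lpNorm p (g i ω) ^ 2 / C ∂μ i = d * L i / C := by
    intro i
    rw [integral_div, integral_const_mul]
  -- per-worker variance bound
  set V : Fin W → ℝ := fun i => ∫ x, ‖Q i x - c‖ ^ 2 ∂μ i with hV
  have hVbound : ∀ i, V i ≤ d * L i / C + σ ^ 2 := by
    intro i
    have h := worker_var (hgmeas i) (hgL2 i) (hQL2 i) (hQmean i) (βint i) (hQvar i) c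
    rw [βval i] at h
    exact h.trans (add_le_add_right (hgvar i) _)
  -- second moments of coordinates
  set m2 : Fin W → Fin d → ℝ := fun i k => ∫ x, Q i x k * Q i x k ∂μ i with hm2
  have QcL2 : ∀ i, MemLp (fun x => Q i x - c) 2 (μ i) := fun i =>
    (hQL2 i).sub (memLp_const c)
  have Vi_eq : ∀ i, V i = ∑ k, (m2 i k - c k ^ 2) := by
    intro i
    rw [hV]
    show ∫ x, ‖(fun x => Q i x - c) x‖ ^ 2 ∂μ i = _
    rw [integral_normsq_eq (QcL2 i)]
    refine Finset.sum_congr rfl fun k _ => ?_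
    have pt : (fun x => ((fun x => Q i x - c) x k) ^ 2)
        = fun x => (Q i x k * Q i x k + c k ^ 2) - 2 * c k * Q i x k := by
      funext x
      show (Q i x k - c k) ^ 2 = _
      ring
    have I1 : Integrable (fun x => Q i x k * Q i x k + c k ^ 2) (μ i) :=
      (l2_mul_integrable' (QikL2 i k) (QikL2 i k)).add (integrable_const _)
    have I2 : Integrable (fun x => 2 * c k * Q i x k) (μ i) := (QikL1 i k).const_mul _
    rw [pt, integral_sub I1 I2,
      integral_add (l2_mul_integrable' (QikL2 i k) (QikL2 i k)) (integrable_const _),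
      integral_const_mul, integral_const, meanQk i k]
    simp only [probReal_univ, ENNReal.toReal_one, smul_eq_mul, one_mul]
    ring
  -- set up product-space facts
  have IE : ∀ i k, Integrable (fun ω : Fin W → Ω => Q i (ω i) k) (Measure.pi μ) := by
    intro i k
    exact (integrable_eval' μ i (mQik i k).aestronglyMeasurable).mpr (QikL1 i k)
  have term_int : ∀ (k : Fin d) (i j : Fin W),
      Integrable (fun ω : Fin W → Ω => Q i (ω i) k * Q j (ω j) k) (Measure.pi μ) := by
    intro k i j
    rcases eq_or_ne i j with rfl | hij
    · exact (integrable_eval' μ i (f := fun x => Q i x k * Q i x k)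
        ((mQik i k).mul (mQik i k)).aestronglyMeasurable).mpr
        (l2_mul_integrable' (QikL2 i k) (QikL2 i k))
    · have hind := (indepFun_eval' μ i j hij).comp (mQik i k) (mQik j k)
      exact hind.integrable_mul (IE i k) (IE j k)
  have term_val : ∀ (k : Fin d) (i j : Fin W),
      ∫ ω : Fin W → Ω, Q i (ω i) k * Q j (ω j) k ∂Measure.pi μ =
        if i = j then m2 i k else c k ^ 2 := by
    intro k i j
    rcases eq_or_ne i j with rfl | hij
    · rw [if_pos rfl, hm2]
      exact integral_eval' μ i (fun x => Q i x k * Q i x k)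
        ((mQik i k).mul (mQik i k)).aestronglyMeasurable
    · rw [if_neg hij]
      have hind := (indepFun_eval' μ i j hij).comp (mQik i k) (mQik j k)
      have h := ProbabilityTheory.IndepFun.integral_fun_mul_eq_mul_integral hind (IE i k).aestronglyMeasurable (IE j k).aestronglyMeasurable
      have e1 : ∫ ω : Fin W → Ω, Q i (ω i) k ∂Measure.pi μ = c k := by
        rw [integral_eval' μ i (fun x => Q i x k) (mQik i k).aestronglyMeasurable, meanQk i k]
      have e2 : ∫ ω : Fin W → Ω, Q j (ω j) k ∂Measure.pi μ = c k := by
        rw [integral_eval' μ j (fun x => Q j x k) (mQik j k).aestronglyMeasurable, meanQk j k]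
      calc ∫ ω : Fin W → Ω, Q i (ω i) k * Q j (ω j) k ∂Measure.pi μ
          = (∫ ω : Fin W → Ω, Q i (ω i) k ∂Measure.pi μ)
            * ∫ ω : Fin W → Ω, Q j (ω j) k ∂Measure.pi μ := h
        _ = c k ^ 2 := by rw [e1, e2, sq]
  -- expand the squared norm of the sum
  have expand : ∀ ω : Fin W → Ω,
      ‖∑ i, Q i (ω i)‖ ^ 2 = ∑ k, ∑ i, ∑ j, Q i (ω i) k * Q j (ω j) k := by
    intro ω
    rw [normsq_eq_sum]
    refine Finset.sum_congr rfl fun k _ => ?_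
    rw [euclid_sum_apply, sq, Finset.sum_mul_sum]
  have Ieq : ∫ ω, ‖∑ i, Q i (ω i)‖ ^ 2 ∂Measure.pi μ
      = ∑ i, V i + (W : ℝ) ^ 2 * ‖c‖ ^ 2 := by
    have step1 : ∫ ω, ‖∑ i, Q i (ω i)‖ ^ 2 ∂Measure.pi μ
        = ∑ k, ∑ i, ∑ j, (if i = j then m2 i k else c k ^ 2) := by
      rw [integral_congr_ae (Filter.Eventually.of_forall expand)]
      rw [integral_finset_sum _ (fun k _ => integrable_finset_sum _
        (fun i _ => integrable_finset_sum _ (fun j _ => term_int k i j)))]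
      refine Finset.sum_congr rfl fun k _ => ?_
      rw [integral_finset_sum _ (fun i _ => integrable_finset_sum _
        (fun j _ => term_int k i j))]
      refine Finset.sum_congr rfl fun i _ => ?_
      rw [integral_finset_sum _ (fun j _ => term_int k i j)]
      exact Finset.sum_congr rfl fun j _ => term_val k i j
    rw [step1]
    have step2 : ∀ (k : Fin d) (i : Fin W),
        ∑ j, (if i = j then m2 i k else c k ^ 2)
          = (m2 i k - c k ^ 2) + W * c k ^ 2 := by
      intro k i
      have : ∀ j : Fin W, (if i = j then m2 i k else c k ^ 2)
          = (if i = j then m2 i k - c k ^ 2 else 0) + c k ^ 2 := by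
        intro j
        by_cases h : i = j <;> simp [h]
      rw [Finset.sum_congr rfl fun j _ => this j, Finset.sum_add_distrib,
        Finset.sum_ite_eq Finset.univ i (fun _ => m2 i k - c k ^ 2),
        if_pos (Finset.mem_univ i), Finset.sum_const, Finset.card_univ, Fintype.card_fin,
        nsmul_eq_mul]
    calc ∑ k, ∑ i, ∑ j, (if i = j then m2 i k else c k ^ 2)
        = ∑ k, ∑ i : Fin W, ((m2 i k - c k ^ 2) + W * c k ^ 2) := by
          refine Finset.sum_congr rfl fun k _ => Finset.sum_congr rfl fun i _ => step2 k i
      _ = ∑ k, ((∑ i : Fin W, (m2 i k - c k ^ 2)) + W * (W * c k ^ 2)) := by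
          refine Finset.sum_congr rfl fun k _ => ?_
          rw [Finset.sum_add_distrib, Finset.sum_const, Finset.card_univ, Fintype.card_fin,
            nsmul_eq_mul]
      _ = ∑ i, V i + (W : ℝ) ^ 2 * ‖c‖ ^ 2 := by
          rw [Finset.sum_add_distrib, Finset.sum_comm]
          congr 1
          · exact (Finset.sum_congr rfl fun i _ => (Vi_eq i).symm)
          · rw [normsq_eq_sum, Finset.mul_sum]
            refine Finset.sum_congr rfl fun k _ => by ring
  -- left-hand side
  have LHSeq : ∫ ω, ‖(W : ℝ)⁻¹ • ∑ i, Q i (ω i)‖ ^ 2 ∂Measure.pi μ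
      = ((W : ℝ)⁻¹) ^ 2 * (∑ i, V i + (W : ℝ) ^ 2 * ‖c‖ ^ 2) := by
    rw [← Ieq, ← integral_const_mul]
    refine integral_congr_ae (Filter.Eventually.of_forall fun ω => ?_)
    show ‖(W : ℝ)⁻¹ • ∑ i, Q i (ω i)‖ ^ 2 = ((W : ℝ)⁻¹) ^ 2 * ‖∑ i, Q i (ω i)‖ ^ 2
    rw [norm_smul, mul_pow, Real.norm_eq_abs, abs_of_nonneg (by positivity)]
  -- right-hand side integral
  have RHSeq : ∫ ω, (W : ℝ)⁻¹ * ∑ i, lpNorm p (g i (ω i)) ^ 2 ∂Measure.pi μ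
      = (W : ℝ)⁻¹ * ∑ i, L i := by
    rw [integral_const_mul]
    congr 1
    rw [integral_finset_sum _ (fun i _ =>
      (integrable_eval' μ i (lpMeas i).aestronglyMeasurable).mpr (lpInt i))]
    exact Finset.sum_congr rfl fun i _ =>
      integral_eval' μ i (fun x => lpNorm p (g i x) ^ 2) (lpMeas i).aestronglyMeasurable
  rw [LHSeq, RHSeq]
  have hsum : ∑ i, V i ≤ ∑ i : Fin W, (d * L i / C + σ ^ 2) :=
    Finset.sum_le_sum fun i _ => hVbound i
  have hsum2 : ∑ i : Fin W, (d * L i / C + σ ^ 2)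
      = d * (∑ i, L i) / C + W * σ ^ 2 := by
    rw [Finset.sum_add_distrib, Finset.sum_const, Finset.card_univ, Fintype.card_fin,
      nsmul_eq_mul]
    rw [← Finset.sum_div, ← Finset.mul_sum]
  have hCne : C ≠ 0 := ne_of_gt hCpos
  have hWne : (W : ℝ) ≠ 0 := ne_of_gt hWpos
  have hsne : ((2 : ℝ) ^ (b - 1) - 1) ≠ 0 := by
    intro h
    rw [sub_eq_zero] at h
    exact absurd h.symm (ne_of_lt hs1)
  calc ((W : ℝ)⁻¹) ^ 2 * (∑ i, V i + (W : ℝ) ^ 2 * ‖c‖ ^ 2)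
      ≤ ((W : ℝ)⁻¹) ^ 2 * ((d * (∑ i, L i) / C + W * σ ^ 2) + (W : ℝ) ^ 2 * ‖c‖ ^ 2) := by
        refine mul_le_mul_of_nonneg_left ?_ (by positivity)
        exact add_le_add_left (hsum.trans_eq hsum2) _
    _ = ‖c‖ ^ 2 + σ ^ 2 / W
        + d * ((W : ℝ)⁻¹ * ∑ i, L i) / (4 * W * ((2 : ℝ) ^ (b - 1) - 1) ^ 2) := by
        rw [hCdef]
        field_simp
        ring
end

section
/- (Theorem 1, convergence error bound.) Let F : ℝ^d → ℝ be L-smooth and μ-strongly convex with global minimizer x*, let η > 0, and set α = 1 − 2μη + Lμη². Suppose the iterates satisfy x_{t+1} = x_t − η·ĝ_t for t = 0, …, T−1, where conditionally on x_t the aggregated gradient ĝ_t satisfies E[ĝ_t | x_t] = ∇F(x_t) and E[‖ĝ_t‖₂² | x_t] ≤ ‖∇F(x_t)‖₂² + σ²/W + d·Ḡ_t²/(4W(2^{b_t−1}−1)²) with deterministic constants Ḡ_t² ≥ 0 and integers b_t ≥ 2. Then E[F(x_T)] − F(x*) ≤ α^T·(F(x_0) − F(x*)) + (Lη²σ²/(2W))·(1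 − α^T)/(1 − α) + (Ldη²/(8W))·Σ_{t=0}^{T−1} α^{T−1−t}·Ḡ_t²/(2^{b_t−1}−1)². -/
open MeasureTheory RealInnerProductSpace Finset

section Helpers

variable {E : Type*} [NormedAddCommGroup E] [InnerProductSpace ℝ E] [CompleteSpace E]

lemma dqsgd_line_hasDerivAt (F : E → ℝ) (hF : Differentiable ℝ F) (x v : E) (s : ℝ) :
    HasDerivAt (fun s : ℝ => F (x + s • v)) ⟪gradient F (x + s • v), v⟫ s := by
  have h1 : HasDerivAt (fun s : ℝ => x + s • v) v s := by
    simpa using ((hasDerivAt_id s).smul_const v).const_add x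
  have h2 := (hF (x + s • v)).hasFDerivAt.comp_hasDerivAt s h1
  have h3 : ⟪gradient F (x + s • v), v⟫ = fderiv ℝ F (x + s • v) v := by
    rw [gradient, InnerProductSpace.toDual_symm_apply]
  rw [h3]; exact h2

lemma dqsgd_grad_continuous (F : E → ℝ) {L : ℝ} (hL0 : 0 < L)
    (hL : ∀ x y, ‖gradient F x - gradient F y‖ ≤ L * ‖x - y‖) :
    Continuous (gradient F) := by
  have : LipschitzWith (Real.toNNReal L) (gradient F) := by
    apply LipschitzWith.of_dist_le_mul
    intro x y
    rw [dist_eq_norm, dist_eq_norm, Real.coe_toNNReal L hL0.le]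
    exact hL x y
  exact this.continuous

lemma dqsgd_descent (F : E → ℝ) (hF : Differentiable ℝ F) {L : ℝ} (hL0 : 0 < L)
    (hL : ∀ x y, ‖gradient F x - gradient F y‖ ≤ L * ‖x - y‖) (x v : E) :
    F (x + v) ≤ F x + ⟪gradient F x, v⟫ + L / 2 * ‖v‖ ^ 2 := by
  set φ' : ℝ → ℝ := fun s => ⟪gradient F (x + s • v), v⟫ with hφ'
  have hd : ∀ s, HasDerivAt (fun s : ℝ => F (x + s • v)) (φ' s) s :=
    fun s => dqsgd_line_hasDerivAt F hF x v s
  have hφc : Continuous φ' := by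
    apply Continuous.inner
    · exact (dqsgd_grad_continuous F hL0 hL).comp
        (continuous_const.add (continuous_id.smul continuous_const))
    · exact continuous_const
  have hFTC : ∫ s in (0:ℝ)..1, φ' s = F (x + v) - F x := by
    have := intervalIntegral.integral_eq_sub_of_hasDerivAt (f := fun s : ℝ => F (x + s • v))
      (f' := φ') (a := 0) (b := 1) (fun s _ => hd s) (hφc.intervalIntegrable 0 1)
    simpa using this
  have hmono : ∫ s in (0:ℝ)..1, φ' s ≤ ∫ s in (0:ℝ)..1, (φ' 0 + L * ‖v‖ ^ 2 * s) := by
    have hgc : Continuous fun s : ℝ => φ' 0 + L * ‖v‖ ^ 2 * s := by fun_prop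
    apply intervalIntegral.integral_mono_on zero_le_one (hφc.intervalIntegrable 0 1)
      (hgc.intervalIntegrable 0 1)
    intro s hs
    have h1 : φ' s - φ' 0 ≤ L * ‖v‖ ^ 2 * s := by
      have : φ' s - φ' 0 = ⟪gradient F (x + s • v) - gradient F (x + (0:ℝ) • v), v⟫ := by
        rw [inner_sub_left]
      rw [this]
      calc ⟪gradient F (x + s • v) - gradient F (x + (0:ℝ) • v), v⟫
          ≤ ‖gradient F (x + s • v) - gradient F (x + (0:ℝ) • v)‖ * ‖v‖ :=
            real_inner_le_norm _ _
        _ ≤ (L * ‖(x + s • v) - (x + (0:ℝ) • v)‖) * ‖v‖ := by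
            apply mul_le_mul_of_nonneg_right (hL _ _) (norm_nonneg _)
        _ = L * ‖v‖ ^ 2 * s := by
            simp only [zero_smul, add_zero, add_sub_cancel_left, norm_smul,
              Real.norm_eq_abs, abs_of_nonneg hs.1]
            ring
    linarith
  have hint : ∫ s in (0:ℝ)..1, (φ' 0 + L * ‖v‖ ^ 2 * s) = φ' 0 + L * ‖v‖ ^ 2 / 2 := by
    have hgc : Continuous fun s : ℝ => L * ‖v‖ ^ 2 * s := by fun_prop
    rw [intervalIntegral.integral_add (intervalIntegrable_const)
      (hgc.intervalIntegrable 0 1),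
      intervalIntegral.integral_const_mul, integral_id]
    simp
    ring
  have hφ0 : φ' 0 = ⟪gradient F x, v⟫ := by simp [hφ']
  rw [hFTC] at hmono
  rw [hint, hφ0] at hmono
  linarith

lemma dqsgd_strong_conv (F : E → ℝ) (hF : Differentiable ℝ F) {μ : ℝ}
    (hconv : ConvexOn ℝ Set.univ fun x => F x - μ / 2 * ⟪x, x⟫) (x y : E) :
    F x + ⟪gradient F x, y - x⟫ + μ / 2 * ‖y - x‖ ^ 2 ≤ F y := by
  set w := y - x with hw
  set h : ℝ → ℝ := fun s => F (x + s • w) - μ / 2 * ⟪x + s • w, x + s • w⟫ with hh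
  have hconvh : ConvexOn ℝ Set.univ h := by
    have := hconv.comp_affineMap (AffineMap.lineMap x y : ℝ →ᵃ[ℝ] E)
    have heq : ((fun z => F z - μ / 2 * ⟪z, z⟫) ∘ (AffineMap.lineMap x y : ℝ →ᵃ[ℝ] E)) = h := by
      funext s
      simp only [Function.comp_apply, AffineMap.lineMap_apply, vsub_eq_sub, vadd_eq_add, hh, hw]
      rw [add_comm]
    rw [heq] at this
    simpa using this
  have hq : ∀ s : ℝ, ⟪x + s • w, x + s • w⟫ = ⟪x,x⟫ + 2 * s * ⟪x,w⟫ + s ^ 2 * ⟪w,w⟫ := by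
    intro s
    rw [real_inner_add_add_self, real_inner_smul_right, real_inner_smul_left,
      real_inner_smul_right]
    ring
  have hd : HasDerivAt h (⟪gradient F x, w⟫ - μ * ⟪x, w⟫) 0 := by
    have h1 : HasDerivAt (fun s : ℝ => F (x + s • w)) ⟪gradient F (x + (0:ℝ) • w), w⟫ 0 :=
      dqsgd_line_hasDerivAt F hF x w 0
    have h2 : HasDerivAt (fun s : ℝ => μ / 2 * ⟪x + s • w, x + s • w⟫)
        (μ * ⟪x, w⟫) 0 := by
      have h3 : (fun s : ℝ => μ / 2 * ⟪x + s • w, x + s • w⟫) =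
          fun s : ℝ => μ / 2 * ⟪x,x⟫ + s * (μ * ⟪x,w⟫) + s ^ 2 * (μ / 2 * ⟪w,w⟫) := by
        funext s; rw [hq s]; ring
      rw [h3]
      have : HasDerivAt (fun s : ℝ => μ / 2 * ⟪x,x⟫ + s * (μ * ⟪x,w⟫) + s ^ 2 * (μ / 2 * ⟪w,w⟫))
          (0 + (μ * ⟪x,w⟫) + (2 * 0 ^ 1 * (μ / 2 * ⟪w,w⟫))) 0 := by
        apply HasDerivAt.add
        apply HasDerivAt.add
        · exact hasDerivAt_const _ _
        · simpa using (hasDerivAt_id (0:ℝ)).mul_const (μ * ⟪x,w⟫)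
        · simpa using ((hasDerivAt_pow 2 (0:ℝ))).mul_const (μ / 2 * ⟪w,w⟫)
      simpa using this
    have := h1.sub h2
    simp only [zero_smul, add_zero] at this
    exact this
  have hslope := hconvh.le_slope_of_hasDerivAt (Set.mem_univ 0) (Set.mem_univ 1) zero_lt_one hd
  rw [slope_def_field] at hslope
  simp only [sub_zero, div_one] at hslope
  have h1 : h 1 = F y - μ / 2 * ⟪y, y⟫ := by simp [hh, hw]
  have h0 : h 0 = F x - μ / 2 * ⟪x, x⟫ := by simp [hh]
  rw [h1, h0] at hslope
  have hxw : ⟪x, w⟫ = ⟪x, y⟫ - ⟪x, x⟫ := by rw [hw, inner_sub_right]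
  have hww : ⟪w, w⟫ = ⟪y,y⟫ - 2 * ⟪x,y⟫ + ⟪x,x⟫ := by
    rw [hw, real_inner_sub_sub_self, real_inner_comm y x]
  have hnw : ‖y - x‖ ^ 2 = ⟪w, w⟫ := (real_inner_self_eq_norm_sq w).symm
  rw [hnw, hww] at *
  rw [hxw] at hslope
  linarith

lemma dqsgd_pl (F : E → ℝ) (hF : Differentiable ℝ F) {μ : ℝ} (hμ : 0 < μ)
    (hconv : ConvexOn ℝ Set.univ fun x => F x - μ / 2 * ⟪x, x⟫)
    (xstar : E) (x : E) :
    2 * μ * (F x - F xstar) ≤ ‖gradient F x‖ ^ 2 := by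
  have h := dqsgd_strong_conv F hF hconv x xstar
  nlinarith [sq_nonneg (‖gradient F x‖ - μ * ‖xstar - x‖), norm_nonneg (gradient F x),
    norm_nonneg (xstar - x), real_inner_le_norm (gradient F x) (xstar - x),
    neg_le_of_abs_le (abs_real_inner_le_norm (gradient F x) (xstar - x))]

end Helpers

section ProbHelpers

variable {Ω : Type*} {m : MeasurableSpace Ω} [m0 : MeasurableSpace Ω] {d : ℕ}

omit m0 in
lemma dqsgd_sm_coord {f : Ω → EuclideanSpace ℝ (Fin d)} (hf : StronglyMeasurable[m] f)
    (i : Fin d) : StronglyMeasurable[m] (fun ω => f ω i) :=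
  @Continuous.comp_stronglyMeasurable Ω (EuclideanSpace ℝ (Fin d)) ℝ m _ _
    (fun x => x i) f (PiLp.continuous_apply 2 _ i) hf

omit m0 in
lemma dqsgd_sm_comp {f : Ω → EuclideanSpace ℝ (Fin d)} (hf : Measurable[m] f)
    {g : EuclideanSpace ℝ (Fin d) → EuclideanSpace ℝ (Fin d)} (hg : Continuous g) :
    StronglyMeasurable[m] (fun ω => g (f ω)) :=
  (hg.measurable.comp hf).stronglyMeasurable

lemma dqsgd_condexp_proj (hm : m ≤ m0) (P : Measure Ω) [IsProbabilityMeasure P]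
    {g : Ω → EuclideanSpace ℝ (Fin d)}
    (hg : Integrable g P) (i : Fin d) :
    (P[(fun ω => g ω i)|m]) =ᵐ[P] fun ω => (P[g|m]) ω i := by
  haveI : SigmaFinite (P.trim hm) := by
    haveI := isFiniteMeasure_trim (μ := P) hm
    infer_instance
  have hcint : Integrable (P[g|m]) P := integrable_condExp
  have ha : Integrable (fun ω => g ω i) P := by
    simpa [PiLp.proj_apply] using (PiLp.proj (𝕜 := ℝ) 2 _ i).integrable_comp hg
  have hb : ∀ s : Set Ω, MeasurableSet[m] s → P s < ⊤ →
      IntegrableOn (fun ω => (P[g|m]) ω i) s P := by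
    intro s _ _
    have := (PiLp.proj (𝕜 := ℝ) 2 _ i).integrable_comp hcint
    simpa [PiLp.proj_apply] using this.integrableOn (s := s)
  have hc : ∀ s : Set Ω, MeasurableSet[m] s → P s < ⊤ →
      ∫ ω in s, (P[g|m]) ω i ∂P = ∫ ω in s, g ω i ∂P := by
    intro s hs hμs
    have h1 := (PiLp.proj (𝕜 := ℝ) 2 _ i).integral_comp_comm (hcint.restrict (s := s))
    have h2 := (PiLp.proj (𝕜 := ℝ) 2 _ i).integral_comp_comm (hg.restrict (s := s))
    have h3 := setIntegral_condExp hm hg hs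
    simp only [PiLp.proj_apply] at h1 h2
    rw [h1, h2, h3]
  have hd' : AEStronglyMeasurable[m] (fun ω => (P[g|m]) ω i) P :=
    StronglyMeasurable.aestronglyMeasurable (dqsgd_sm_coord stronglyMeasurable_condExp i)
  exact (ae_eq_condExp_of_forall_setIntegral_eq hm ha hb hc hd').symm

lemma dqsgd_integral_inner (hm : m ≤ m0) (P : Measure Ω) [IsProbabilityMeasure P]
    {h g : Ω → EuclideanSpace ℝ (Fin d)}
    (hhm : StronglyMeasurable[m] h) (hh2 : MemLp h 2 P) (hg2 : MemLp g 2 P)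
    (hcond : P[g|m] =ᵐ[P] h) :
    ∫ ω, ⟪h ω, g ω⟫ ∂P = ∫ ω, ‖h ω‖ ^ 2 ∂P := by
  haveI : SigmaFinite (P.trim hm) := by
    haveI := isFiniteMeasure_trim (μ := P) hm
    infer_instance
  have habs : ∀ (x : EuclideanSpace ℝ (Fin d)) (i : Fin d), |x i| ≤ ‖x‖ := by
    intro x i
    have h1 : ⟪x, EuclideanSpace.single i (1:ℝ)⟫ = x i := by
      simp [EuclideanSpace.inner_single_right]
    have := abs_real_inner_le_norm x (EuclideanSpace.single i (1:ℝ))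
    rwa [h1, EuclideanSpace.norm_single, norm_one, mul_one] at this
  have hbound : Integrable (fun ω => (‖h ω‖ ^ 2 + ‖g ω‖ ^ 2) / 2) P :=
    (hh2.norm.integrable_sq.add hg2.norm.integrable_sq).div_const 2
  have hh1 : AEStronglyMeasurable h P := (hhm.mono hm).aestronglyMeasurable
  have hcm : ∀ (f : Ω → EuclideanSpace ℝ (Fin d)), AEStronglyMeasurable f P →
      ∀ i : Fin d, AEStronglyMeasurable (fun ω => f ω i) P := by
    intro f hf i
    exact (PiLp.continuous_apply 2 _ i).comp_aestronglyMeasurable hf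
  have hprod : ∀ i : Fin d, Integrable (fun ω => h ω i * g ω i) P := by
    intro i
    apply hbound.mono' ((hcm h hh1 i).mul (hcm g hg2.1 i))
    filter_upwards with ω
    have h1 := habs (h ω) i
    have h2 := habs (g ω) i
    show ‖h ω i * g ω i‖ ≤ _
    rw [norm_mul]; simp only [Real.norm_eq_abs]
    nlinarith [abs_nonneg (h ω i), abs_nonneg (g ω i), norm_nonneg (h ω), norm_nonneg (g ω),
      sq_nonneg (‖h ω‖ - ‖g ω‖)]
  have hhsq : ∀ i : Fin d, Integrable (fun ω => h ω i * h ω i) P := by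
    intro i
    apply (hh2.norm.integrable_sq).mono' ((hcm h hh1 i).mul (hcm h hh1 i))
    filter_upwards with ω
    have h1 := habs (h ω) i
    show ‖h ω i * h ω i‖ ≤ _
    rw [norm_mul]; simp only [Real.norm_eq_abs]
    nlinarith [abs_nonneg (h ω i), norm_nonneg (h ω)]
  have hcoord : ∀ i : Fin d, ∫ ω, h ω i * g ω i ∂P = ∫ ω, h ω i * h ω i ∂P := by
    intro i
    have hgi : Integrable (fun ω => g ω i) P := by
      simpa [PiLp.proj_apply] using
        (PiLp.proj (𝕜 := ℝ) 2 _ i).integrable_comp (hg2.integrable one_le_two)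
    have hpull : P[(fun ω => h ω i) * (fun ω => g ω i)|m]
        =ᵐ[P] (fun ω => h ω i) * P[(fun ω => g ω i)|m] :=
      condExp_mul_of_stronglyMeasurable_left (dqsgd_sm_coord hhm i) (hprod i) hgi
    have hci := dqsgd_condexp_proj hm P (hg2.integrable one_le_two) i
    have hcondi : (fun ω => (P[g|m]) ω i) =ᵐ[P] fun ω => h ω i := by
      filter_upwards [hcond] with ω hω
      rw [hω]
    calc ∫ ω, h ω i * g ω i ∂P
        = ∫ ω, ((fun ω => h ω i) * (fun ω => g ω i)) ω ∂P := rfl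
      _ = ∫ ω, (P[(fun ω => h ω i) * (fun ω => g ω i)|m]) ω ∂P :=
          (integral_condExp (f := (fun ω => h ω i) * (fun ω => g ω i)) hm).symm
      _ = ∫ ω, h ω i * h ω i ∂P := by
          apply integral_congr_ae
          filter_upwards [hpull, hci, hcondi] with ω h1 h2 h3
          rw [h1]
          simp only [Pi.mul_apply]
          rw [h2, h3]
  calc ∫ ω, ⟪h ω, g ω⟫ ∂P = ∫ ω, ∑ i : Fin d, h ω i * g ω i ∂P := by
        apply integral_congr_ae; filter_upwards with ω
        rw [PiLp.inner_apply]; simp [RCLike.inner_apply, mul_comm]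
    _ = ∑ i : Fin d, ∫ ω, h ω i * g ω i ∂P := integral_finset_sum _ (fun i _ => hprod i)
    _ = ∑ i : Fin d, ∫ ω, h ω i * h ω i ∂P := by simp_rw [hcoord]
    _ = ∫ ω, ∑ i : Fin d, h ω i * h ω i ∂P := (integral_finset_sum _ (fun i _ => hhsq i)).symm
    _ = ∫ ω, ‖h ω‖ ^ 2 ∂P := by
        apply integral_congr_ae; filter_upwards with ω
        rw [← real_inner_self_eq_norm_sq, PiLp.inner_apply]
        simp [RCLike.inner_apply, mul_comm]
        simp only [sq]

end ProbHelpers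

lemma dqsgd_term_split (A L η σ Gb W d β : ℝ) (hW : W ≠ 0) (hβ : β ≠ 0) :
    A * (L * η ^ 2 / 2 * (σ ^ 2 / W + d * Gb / (4 * W * β ^ 2))) =
      L * η ^ 2 * σ ^ 2 / (2 * W) * A + L * d * η ^ 2 / (8 * W) * (A * Gb / β ^ 2) := by
  field_simp
  ring

set_option maxHeartbeats 2000000 in
/-- **Theorem 1, convergence error bound.** For `L`-smooth, `μ`-strongly
convex `F` with minimizer `x*`, running quantized distributed SGD
`x_{t+1} = x_t − η·ĝ_t`, where conditionally on `x_t` the aggregated gradient `ĝ_t` is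
unbiased with second moment at most
`‖∇F(x_t)‖₂² + σ²/W + d·Ḡ_t²/(4W(2^{b_t−1}−1)²)`, yields
`E[F(x_T)] − F(x*) ≤ α^T·(F(x_0) − F(x*)) + (Lη²σ²/(2W))·(1 − α^T)/(1 − α)
  + (Ldη²/(8W))·Σ_{t<T} α^{T−1−t}·Ḡ_t²/(2^{b_t−1}−1)²`
with `α = 1 − 2μη + Lμη²` (assumed to lie in `(0,1)`). -/
theorem dqsgd_convergence_bound {d W : ℕ} (hW : 0 < W)
    (F : EuclideanSpace ℝ (Fin d) → ℝ) (hF : Differentiable ℝ F)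
    (L μ η σ : ℝ) (hL0 : 0 < L)
    (hL : ∀ x y, ‖gradient F x - gradient F y‖ ≤ L * ‖x - y‖)
    (hμ : 0 < μ) (hconv : ConvexOn ℝ Set.univ fun x => F x - μ / 2 * ⟪x, x⟫)
    (xstar : EuclideanSpace ℝ (Fin d)) (hmin : ∀ x, F xstar ≤ F x)
    (hη : 0 < η) (α : ℝ) (hα : α = 1 - 2 * μ * η + L * μ * η ^ 2)
    (hα0 : 0 < α) (hα1 : α < 1)
    (T : ℕ) (b : ℕ → ℕ) (hb : ∀ t, 2 ≤ b t)
    (Gbarsq : ℕ → ℝ) (hGbarsq : ∀ t, 0 ≤ Gbarsq t)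
    {Ω : Type*} [MeasurableSpace Ω] (P : Measure Ω) [IsProbabilityMeasure P]
    -- the iterates `x_t` and the aggregated gradients `ĝ_t`
    (X G : Ω → ℕ → EuclideanSpace ℝ (Fin d)) (x0 : EuclideanSpace ℝ (Fin d))
    (hX0 : ∀ ω, X ω 0 = x0)
    (hupdate : ∀ ω t, X ω (t + 1) = X ω t - η • G ω t)
    (hXmeas : ∀ t, Measurable fun ω => X ω t)
    (hGL2 : ∀ t, MemLp (fun ω => G ω t) 2 P)
    (hFX : ∀ t, Integrable (fun ω => F (X ω t)) P)
    (hGmean : ∀ t, P[fun ω => G ω t|MeasurableSpace.comap (fun ω => X ω t) inferInstance]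
      =ᵐ[P] fun ω => gradient F (X ω t))
    (hGsq : ∀ t,
      P[fun ω => ‖G ω t‖ ^ 2|MeasurableSpace.comap (fun ω => X ω t) inferInstance]
        ≤ᵐ[P] fun ω => ‖gradient F (X ω t)‖ ^ 2 + σ ^ 2 / W +
          d * Gbarsq t / (4 * W * ((2 : ℝ) ^ (b t - 1) - 1) ^ 2)) :
    (∫ ω, F (X ω T) ∂P) - F xstar ≤
      α ^ T * (F x0 - F xstar) +
        L * η ^ 2 * σ ^ 2 / (2 * W) * ((1 - α ^ T) / (1 - α)) +
        L * d * η ^ 2 / (8 * W) *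
          ∑ t ∈ range T, α ^ (T - 1 - t) * Gbarsq t / ((2 : ℝ) ^ (b t - 1) - 1) ^ 2 := by
  
  -- abbreviations
  have hW0 : ((W : ℝ)) ≠ 0 := Nat.cast_ne_zero.mpr hW.ne'
  have hβ1 : ∀ t, (1:ℝ) ≤ (2 : ℝ) ^ (b t - 1) - 1 := by
    intro t
    have h1 : (2:ℝ) ^ 1 ≤ (2:ℝ) ^ (b t - 1) :=
      pow_le_pow_right₀ one_le_two (by have := hb t; omega)
    simp at h1; linarith
  have hβ0 : ∀ t, ((2 : ℝ) ^ (b t - 1) - 1) ≠ 0 := fun t => by have := hβ1 t; linarith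
  have hK0 : ∀ t, 0 ≤ (d : ℝ) * Gbarsq t / (4 * W * ((2 : ℝ) ^ (b t - 1) - 1) ^ 2) := by
    intro t
    apply div_nonneg (mul_nonneg (Nat.cast_nonneg d) (hGbarsq t))
    positivity
  have hσW : 0 ≤ σ ^ 2 / (W:ℝ) := by positivity
  -- L2 membership of iterates and gradients
  have hXL2 : ∀ t, MemLp (fun ω => X ω t) 2 P := by
    intro t
    induction t with
    | zero =>
      have : (fun ω => X ω 0) = fun _ : Ω => x0 := by funext ω; exact hX0 ω
      rw [this]; exact memLp_const x0
    | succ n ih =>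
      have : (fun ω => X ω (n+1)) = fun ω => X ω n - η • G ω n := by
        funext ω; exact hupdate ω n
      rw [this]; exact ih.sub ((hGL2 n).const_smul η)
  have hgc : Continuous (gradient F) := dqsgd_grad_continuous F hL0 hL
  have hgrad2 : ∀ t, MemLp (fun ω => gradient F (X ω t)) 2 P := by
    intro t
    have hb2 : MemLp (fun ω => ‖gradient F x0‖ + L * ‖X ω t - x0‖) 2 P :=
      by
        have h1 : MemLp (fun ω => ‖X ω t - x0‖) 2 P := ((hXL2 t).sub (memLp_const x0)).norm
        have h2 : MemLp (fun ω => L * ‖X ω t - x0‖) 2 P := h1.const_mul L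
        have hc : MemLp (fun _ : Ω => ‖gradient F x0‖) 2 P := memLp_const _
        exact hc.add h2
    apply MemLp.of_le hb2 (hgc.comp_aestronglyMeasurable (hXmeas t).aestronglyMeasurable)
    filter_upwards with ω
    have h1 : ‖gradient F (X ω t)‖ - ‖gradient F x0‖ ≤ ‖gradient F (X ω t) - gradient F x0‖ :=
      norm_sub_norm_le _ _
    have h2 := hL (X ω t) x0
    have h3 : 0 ≤ L * ‖X ω t - x0‖ := mul_nonneg hL0.le (norm_nonneg _)
    have h4 : ‖‖gradient F x0‖ + L * ‖X ω t - x0‖‖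
        = ‖gradient F x0‖ + L * ‖X ω t - x0‖ := by
      rw [Real.norm_eq_abs, abs_of_nonneg (by positivity)]
    rw [h4]
    linarith
  -- key per-step facts
  have hstep : ∀ t : ℕ, (∫ ω, F (X ω (t+1)) ∂P) - F xstar ≤
      α * ((∫ ω, F (X ω t) ∂P) - F xstar) +
      L * η ^ 2 / 2 * (σ ^ 2 / W +
        d * Gbarsq t / (4 * W * ((2 : ℝ) ^ (b t - 1) - 1) ^ 2)) := by
    intro t
    have hm : MeasurableSpace.comap (fun ω => X ω t) inferInstance ≤ ‹MeasurableSpace Ω› :=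
      (hXmeas t).comap_le
    haveI : SigmaFinite (P.trim hm) := by
      haveI := isFiniteMeasure_trim (μ := P) hm
      infer_instance
    have hXm : Measurable[MeasurableSpace.comap (fun ω => X ω t) inferInstance]
        (fun ω => X ω t) := Measurable.of_comap_le le_rfl
    have hsm : StronglyMeasurable[MeasurableSpace.comap (fun ω => X ω t) inferInstance]
        (fun ω => gradient F (X ω t)) := dqsgd_sm_comp hXm hgc
    -- integrability facts
    have i1 : Integrable (fun ω => ‖G ω t‖ ^ 2) P := (hGL2 t).norm.integrable_sq
    have i2 : Integrable (fun ω => ‖gradient F (X ω t)‖ ^ 2) P :=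
      (hgrad2 t).norm.integrable_sq
    have ibnd : Integrable (fun ω => (‖gradient F (X ω t)‖ ^ 2 + ‖G ω t‖ ^ 2) / 2) P :=
      (i2.add i1).div_const 2
    have hinner : Integrable (fun ω => ⟪gradient F (X ω t), G ω t⟫) P := by
      apply ibnd.mono' (((hgrad2 t).1.inner (hGL2 t).1))
      filter_upwards with ω
      have h1 := abs_real_inner_le_norm (gradient F (X ω t)) (G ω t)
      rw [Real.norm_eq_abs]
      nlinarith [norm_nonneg (gradient F (X ω t)), norm_nonneg (G ω t),
        sq_nonneg (‖gradient F (X ω t)‖ - ‖G ω t‖)]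
    -- inner product identity
    have key1 : ∫ ω, ⟪gradient F (X ω t), G ω t⟫ ∂P
        = ∫ ω, ‖gradient F (X ω t)‖ ^ 2 ∂P :=
      dqsgd_integral_inner hm P hsm (hgrad2 t) (hGL2 t) (hGmean t)
    -- second moment bound
    have key2 : ∫ ω, ‖G ω t‖ ^ 2 ∂P ≤ (∫ ω, ‖gradient F (X ω t)‖ ^ 2 ∂P) + σ ^ 2 / W +
        d * Gbarsq t / (4 * W * ((2 : ℝ) ^ (b t - 1) - 1) ^ 2) := by
      have e1 : ∫ ω, ‖G ω t‖ ^ 2 ∂P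
          = ∫ ω, (P[fun ω => ‖G ω t‖ ^ 2|MeasurableSpace.comap (fun ω => X ω t)
              inferInstance]) ω ∂P := (integral_condExp hm).symm
      rw [e1]
      have irhs1 : Integrable (fun ω => ‖gradient F (X ω t)‖ ^ 2 + σ ^ 2 / W) P :=
        i2.add (integrable_const _)
      have irhs : Integrable (fun ω => ‖gradient F (X ω t)‖ ^ 2 + σ ^ 2 / W +
          d * Gbarsq t / (4 * W * ((2 : ℝ) ^ (b t - 1) - 1) ^ 2)) P :=
        irhs1.add (integrable_const _)
      have := integral_mono_ae integrable_condExp irhs (hGsq t)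
      calc ∫ ω, (P[fun ω => ‖G ω t‖ ^ 2|MeasurableSpace.comap (fun ω => X ω t)
              inferInstance]) ω ∂P
          ≤ ∫ ω, (‖gradient F (X ω t)‖ ^ 2 + σ ^ 2 / W +
              d * Gbarsq t / (4 * W * ((2 : ℝ) ^ (b t - 1) - 1) ^ 2)) ∂P := this
        _ = (∫ ω, ‖gradient F (X ω t)‖ ^ 2 ∂P) + σ ^ 2 / W +
              d * Gbarsq t / (4 * W * ((2 : ℝ) ^ (b t - 1) - 1) ^ 2) := by
            rw [integral_add irhs1 (integrable_const _),
              integral_add i2 (integrable_const _), integral_const]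
            simp [measure_univ]
    -- descent step, pointwise then integrated
    have hdesc : ∀ ω, F (X ω (t+1)) ≤ F (X ω t) - η * ⟪gradient F (X ω t), G ω t⟫ +
        L * η ^ 2 / 2 * ‖G ω t‖ ^ 2 := by
      intro ω
      have h1 := dqsgd_descent F hF hL0 hL (X ω t) (-(η • G ω t))
      have h2 : X ω t + -(η • G ω t) = X ω (t+1) := by
        rw [hupdate ω t, sub_eq_add_neg]
      rw [h2] at h1
      have h3 : ⟪gradient F (X ω t), -(η • G ω t)⟫ = -(η * ⟪gradient F (X ω t), G ω t⟫) := by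
        rw [inner_neg_right, real_inner_smul_right]
      have h4 : ‖-(η • G ω t)‖ ^ 2 = η ^ 2 * ‖G ω t‖ ^ 2 := by
        rw [norm_neg, norm_smul, Real.norm_eq_abs, abs_of_pos hη, mul_pow]
      rw [h3, h4] at h1
      linarith
    have hstep1 : ∫ ω, F (X ω (t+1)) ∂P ≤ (∫ ω, F (X ω t) ∂P)
        - η * (∫ ω, ⟪gradient F (X ω t), G ω t⟫ ∂P)
        + L * η ^ 2 / 2 * (∫ ω, ‖G ω t‖ ^ 2 ∂P) := by
      have iA : Integrable (fun ω => F (X ω t) - η * ⟪gradient F (X ω t), G ω t⟫) P :=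
        (hFX t).sub (hinner.const_mul η)
      have iB : Integrable (fun ω => L * η ^ 2 / 2 * ‖G ω t‖ ^ 2) P := i1.const_mul _
      have iC : Integrable (fun ω => η * ⟪gradient F (X ω t), G ω t⟫) P := hinner.const_mul η
      have hmono := integral_mono (hFX (t+1)) (iA.add iB) hdesc
      calc ∫ ω, F (X ω (t+1)) ∂P
          ≤ ∫ ω, (F (X ω t) - η * ⟪gradient F (X ω t), G ω t⟫
              + L * η ^ 2 / 2 * ‖G ω t‖ ^ 2) ∂P := hmono
        _ = (∫ ω, F (X ω t) ∂P) - η * (∫ ω, ⟪gradient F (X ω t), G ω t⟫ ∂P)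
            + L * η ^ 2 / 2 * (∫ ω, ‖G ω t‖ ^ 2 ∂P) := by
            rw [integral_add iA iB, integral_sub (hFX t) iC,
              integral_const_mul, integral_const_mul]
    -- PL inequality integrated
    have hPL : 2 * μ * ((∫ ω, F (X ω t) ∂P) - F xstar)
        ≤ ∫ ω, ‖gradient F (X ω t)‖ ^ 2 ∂P := by
      have iD : Integrable (fun ω => F (X ω t) - F xstar) P := (hFX t).sub (integrable_const _)
      have iE : Integrable (fun ω => 2 * μ * (F (X ω t) - F xstar)) P := iD.const_mul _
      have hmono := integral_mono iE i2 (fun ω => dqsgd_pl F hF hμ hconv xstar (X ω t))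
      calc 2 * μ * ((∫ ω, F (X ω t) ∂P) - F xstar)
          = ∫ ω, 2 * μ * (F (X ω t) - F xstar) ∂P := by
            rw [integral_const_mul, integral_sub (hFX t) (integrable_const _), integral_const]
            simp [measure_univ]
        _ ≤ ∫ ω, ‖gradient F (X ω t)‖ ^ 2 ∂P := hmono
    -- combine
    have hηc : 0 ≤ η - L * η ^ 2 / 2 := by nlinarith [hα1, hα, hμ, hη]
    have hc0 : 0 ≤ L * η ^ 2 / 2 := by positivity
    set N := ∫ ω, ‖gradient F (X ω t)‖ ^ 2 ∂P with hN
    set Q := ∫ ω, ‖G ω t‖ ^ 2 ∂P with hQ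
    set At := ∫ ω, F (X ω t) ∂P with hAt
    rw [key1] at hstep1
    have h5 : L * η ^ 2 / 2 * Q ≤ L * η ^ 2 / 2 * (N + σ ^ 2 / W +
        d * Gbarsq t / (4 * W * ((2 : ℝ) ^ (b t - 1) - 1) ^ 2)) :=
      mul_le_mul_of_nonneg_left key2 hc0
    have h6 : (η - L * η ^ 2 / 2) * (2 * μ * (At - F xstar)) ≤ (η - L * η ^ 2 / 2) * N :=
      mul_le_mul_of_nonneg_left hPL hηc
    have h7 : α * (At - F xstar) = (At - F xstar)
        - (η - L * η ^ 2 / 2) * (2 * μ * (At - F xstar)) := by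
      rw [hα]; ring
    rw [h7]
    nlinarith [hstep1, h5, h6]
  -- induction
  have main : ∀ n : ℕ, (∫ ω, F (X ω n) ∂P) - F xstar ≤
      α ^ n * (F x0 - F xstar) + ∑ t ∈ range n, α ^ (n - 1 - t) *
        (L * η ^ 2 / 2 * (σ ^ 2 / W +
          d * Gbarsq t / (4 * W * ((2 : ℝ) ^ (b t - 1) - 1) ^ 2))) := by
    intro n
    induction n with
    | zero =>
      have h0 : (∫ ω, F (X ω 0) ∂P) = F x0 := by
        have : (fun ω => F (X ω 0)) = fun _ : Ω => F x0 := by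
          funext ω; rw [hX0]
        rw [this, integral_const]; simp [measure_univ]
      rw [h0]; simp
    | succ n ih =>
      have h1 := hstep n
      have h2 : α * ((∫ ω, F (X ω n) ∂P) - F xstar) ≤
          α * (α ^ n * (F x0 - F xstar) + ∑ t ∈ range n, α ^ (n - 1 - t) *
            (L * η ^ 2 / 2 * (σ ^ 2 / W +
              d * Gbarsq t / (4 * W * ((2 : ℝ) ^ (b t - 1) - 1) ^ 2)))) :=
        mul_le_mul_of_nonneg_left ih hα0.le
      have h3 : α * (α ^ n * (F x0 - F xstar) + ∑ t ∈ range n, α ^ (n - 1 - t) *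
            (L * η ^ 2 / 2 * (σ ^ 2 / W +
              d * Gbarsq t / (4 * W * ((2 : ℝ) ^ (b t - 1) - 1) ^ 2)))) +
          L * η ^ 2 / 2 * (σ ^ 2 / W +
            d * Gbarsq n / (4 * W * ((2 : ℝ) ^ (b n - 1) - 1) ^ 2))
          = α ^ (n+1) * (F x0 - F xstar) + ∑ t ∈ range (n+1), α ^ (n + 1 - 1 - t) *
            (L * η ^ 2 / 2 * (σ ^ 2 / W +
              d * Gbarsq t / (4 * W * ((2 : ℝ) ^ (b t - 1) - 1) ^ 2))) := by
        rw [sum_range_succ, mul_add, Finset.mul_sum]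
        have h4 : ∀ t ∈ range n, α * (α ^ (n - 1 - t) *
            (L * η ^ 2 / 2 * (σ ^ 2 / W +
              d * Gbarsq t / (4 * W * ((2 : ℝ) ^ (b t - 1) - 1) ^ 2))))
            = α ^ (n + 1 - 1 - t) * (L * η ^ 2 / 2 * (σ ^ 2 / W +
              d * Gbarsq t / (4 * W * ((2 : ℝ) ^ (b t - 1) - 1) ^ 2))) := by
          intro t ht
          have htn : t < n := mem_range.mp ht
          have he : n - 1 - t + 1 = n + 1 - 1 - t := by omega
          rw [← mul_assoc, ← pow_succ', he]
        rw [sum_congr rfl h4]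
        have h5 : n + 1 - 1 - n = 0 := by omega
        rw [h5, pow_zero, one_mul, pow_succ']
        ring
      calc (∫ ω, F (X ω (n+1)) ∂P) - F xstar
          ≤ α * ((∫ ω, F (X ω n) ∂P) - F xstar) +
            L * η ^ 2 / 2 * (σ ^ 2 / W +
              d * Gbarsq n / (4 * W * ((2 : ℝ) ^ (b n - 1) - 1) ^ 2)) := h1
        _ ≤ α * (α ^ n * (F x0 - F xstar) + ∑ t ∈ range n, α ^ (n - 1 - t) *
            (L * η ^ 2 / 2 * (σ ^ 2 / W +
              d * Gbarsq t / (4 * W * ((2 : ℝ) ^ (b t - 1) - 1) ^ 2)))) +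
            L * η ^ 2 / 2 * (σ ^ 2 / W +
              d * Gbarsq n / (4 * W * ((2 : ℝ) ^ (b n - 1) - 1) ^ 2)) := by
            linarith
        _ = _ := h3
  -- final conversion of the sums
  have hsum : ∑ t ∈ range T, α ^ (T - 1 - t) *
      (L * η ^ 2 / 2 * (σ ^ 2 / W +
        d * Gbarsq t / (4 * W * ((2 : ℝ) ^ (b t - 1) - 1) ^ 2)))
      = L * η ^ 2 * σ ^ 2 / (2 * W) * ((1 - α ^ T) / (1 - α)) +
        L * d * η ^ 2 / (8 * W) *
          ∑ t ∈ range T, α ^ (T - 1 - t) * Gbarsq t / ((2 : ℝ) ^ (b t - 1) - 1) ^ 2 := by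
    have hterm : ∀ t ∈ range T, α ^ (T - 1 - t) *
        (L * η ^ 2 / 2 * (σ ^ 2 / W +
          d * Gbarsq t / (4 * W * ((2 : ℝ) ^ (b t - 1) - 1) ^ 2)))
        = L * η ^ 2 * σ ^ 2 / (2 * W) * α ^ (T - 1 - t) +
          L * d * η ^ 2 / (8 * W) *
            (α ^ (T - 1 - t) * Gbarsq t / ((2 : ℝ) ^ (b t - 1) - 1) ^ 2) := by
      intro t _
      exact dqsgd_term_split _ _ _ _ _ _ _ _ hW0 (hβ0 t)
    rw [sum_congr rfl hterm, sum_add_distrib, ← Finset.mul_sum, ← Finset.mul_sum]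
    have hgeom : ∑ t ∈ range T, α ^ (T - 1 - t) = (1 - α ^ T) / (1 - α) := by
      rw [Finset.sum_range_reflect (fun k => α ^ k) T, geom_sum_eq hα1.ne T]
      rw [div_eq_div_iff (sub_ne_zero.mpr hα1.ne) (sub_ne_zero.mpr hα1.ne')]
      ring
    rw [hgeom]
  have := main T
  rw [hsum] at this
  linarith
end

section
/- (Optimality of the dynamic bit allocation.) Let T be a positive integer, a_t > 0 for t = 0, …, T−1, and ε̂ > 0. Among all positive reals s_0, …, s_{T−1} satisfying Σ_{t=0}^{T−1} a_t/s_t² = ε̂, the sum Σ_{t=0}^{T−1} log₂ s_t is minimized when a_t/s_t² = ε̂/T for every t, i.e., s_t = √(T·a_t/ε̂); equivalently, for any feasible (s_t), Σ_{t=0}^{T−1} log₂ s_t ≥ (1/2)·Σ_{t=0}^{T−1} log₂(T·a_t/ε̂). -/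
open Finset

/-- **optimality of the dynamic bit allocation.** Among positive reals
`s_0, …, s_{T−1}` with `Σ a_t/s_t² = ε̂`, the sum `Σ log₂ s_t` is minimized by the equal
allocation `a_t/s_t² = ε̂/T`: every feasible `(s_t)` satisfies
`Σ log₂ s_t ≥ (1/2)·Σ log₂(T·a_t/ε̂)`. -/
theorem bit_allocation_optimal (T : ℕ) (hT : 0 < T) (a : ℕ → ℝ)
    (ha : ∀ t ∈ range T, 0 < a t) (ε : ℝ) (hε : 0 < ε) (s : ℕ → ℝ)
    (hs : ∀ t ∈ range T, 0 < s t)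
    (hfeas : ∑ t ∈ range T, a t / s t ^ 2 = ε) :
    ∑ t ∈ range T, Real.logb 2 (s t) ≥
      1 / 2 * ∑ t ∈ range T, Real.logb 2 (T * a t / ε) := by
  have hT' : (0 : ℝ) < T := Nat.cast_pos.mpr hT
  set x : ℕ → ℝ := fun t => a t / s t ^ 2 with hx
  have hxpos : ∀ t ∈ range T, 0 < x t := fun t ht =>
    div_pos (ha t ht) (pow_pos (hs t ht) 2)
  -- AM-GM: ∏ x^(1/T) ≤ ε/T
  have hgm := Real.geom_mean_le_arith_mean_weighted (range T) (fun _ => 1 / T) x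
    (fun t _ => by positivity)
    (by simp [Finset.sum_const, Finset.card_range]; field_simp)
    (fun t ht => (hxpos t ht).le)
  have hrhs : ∑ t ∈ range T, (1 / (T:ℝ)) * x t = ε / T := by
    rw [← Finset.mul_sum, hfeas]; ring
  rw [hrhs] at hgm
  have hprodpos : 0 < ∏ t ∈ range T, x t ^ (1 / (T:ℝ)) :=
    Finset.prod_pos fun t ht => Real.rpow_pos_of_pos (hxpos t ht) _
  have hlog : ∑ t ∈ range T, (1 / (T:ℝ)) * Real.log (x t) ≤ Real.log (ε / T) := by
    have := Real.log_le_log hprodpos hgm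
    rwa [Real.log_prod (fun t ht => (Real.rpow_pos_of_pos (hxpos t ht) _).ne'),
      Finset.sum_congr rfl (fun t ht => Real.log_rpow (hxpos t ht) _)] at this
  have hsumlog : ∑ t ∈ range T, Real.log (x t) ≤ T * Real.log (ε / T) := by
    rw [← Finset.mul_sum] at hlog
    calc ∑ t ∈ range T, Real.log (x t)
        = T * ((1 / (T:ℝ)) * ∑ t ∈ range T, Real.log (x t)) := by field_simp
      _ ≤ T * Real.log (ε / T) := by exact mul_le_mul_of_nonneg_left hlog hT'.le
  -- rewrite log x t = log a t - 2 log s t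
  have hkey : ∑ t ∈ range T, Real.log (a t) - 2 * ∑ t ∈ range T, Real.log (s t)
      ≤ T * (Real.log ε - Real.log T) := by
    rw [← Real.log_div hε.ne' hT'.ne']
    calc _ = ∑ t ∈ range T, (Real.log (a t) - 2 * Real.log (s t)) := by
          rw [Finset.sum_sub_distrib, Finset.mul_sum]
      _ = ∑ t ∈ range T, Real.log (x t) := by
          refine Finset.sum_congr rfl fun t ht => ?_
          rw [hx]
          rw [Real.log_div (ha t ht).ne' (pow_pos (hs t ht) 2).ne',
            Real.log_pow]
          push_cast; ring
      _ ≤ _ := hsumlog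
  have h2 : ∑ t ∈ range T, Real.log (T * a t / ε)
      = ∑ t ∈ range T, Real.log (a t) + T * (Real.log T - Real.log ε) := by
    rw [Finset.sum_congr rfl (fun t ht => by
      rw [Real.log_div (mul_pos hT' (ha t ht)).ne' hε.ne',
        Real.log_mul hT'.ne' (ha t ht).ne'])]
    simp [Finset.sum_sub_distrib, Finset.sum_add_distrib, Finset.sum_const,
      Finset.card_range]
    ring
  have hmain : ∑ t ∈ range T, Real.log (s t) ≥
      1 / 2 * ∑ t ∈ range T, Real.log (T * a t / ε) := by
    rw [h2]; linarith
  -- convert to logb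
  have hlog2 : (0 : ℝ) < Real.log 2 := Real.log_pos one_lt_two
  simp only [Real.logb]
  rw [← Finset.sum_div, ← Finset.sum_div, ge_iff_le,
    show (1:ℝ)/2 * ((∑ t ∈ range T, Real.log (↑T * a t / ε)) / Real.log 2)
      = (1/2 * ∑ t ∈ range T, Real.log (↑T * a t / ε)) / Real.log 2 from by ring]
  exact (div_le_div_iff_of_pos_right hlog2).mpr hmain
end
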